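/- Let (E, λ) be a limit-closed connectivity system, X ⊆ E and k ∈ ℕ. If every subset of X of size at most k+1 has connectivity at most k, then λ(X) ≤ k. -/

import Mathlib

open Set

/-- A symmetric set function: `λ(A) = λ(E \ A)`. -/
def SymmFn {E : Type*} (lam : Set E → ℕ∞) : Prop := ∀ A : Set E, lam Aᶜ = lam A

/-- A submodular set function: `λ(A) + λ(B) ≥ λ(A ∪ B) + λ(A ∩ B)`. -/
def SubmodularFn {E : Type*} (lam : Set E → ℕ∞) : Prop :=
  ∀ A B : Set E, lam (A ∪ B) + lam (A ∩ B) ≤ lam A + lam B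

/-- A limit-closed set function: the union of a (nonempty) chain of sets of connectivity at most
`k` again has connectivity at most `k`. -/
def LimitClosedFn {E : Type*} (lam : Set E → ℕ∞) : Prop :=
  ∀ (k : ℕ) (C : Set (Set E)), C.Nonempty → IsChain (· ⊆ ·) C →
    (∀ A ∈ C, lam A ≤ (k : ℕ∞)) → lam (⋃₀ C) ≤ (k : ℕ∞)

/-- Auxiliary Zorn argument: if some finite `T₀ ⊆ X` with `|T₀| ≤ k` has `λ(T₀) ≥ k`,
then `λ(X) ≤ k`. -/
lemma aux_zorn {E : Type*} (lam : Set E → ℕ∞)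
    (hsub : SubmodularFn lam) (hlim : LimitClosedFn lam)
    (k : ℕ) (X : Set E) (T₀ : Set E) (hT0X : T₀ ⊆ X) (hT0fin : T₀.Finite)
    (hT0card : T₀.ncard ≤ k) (hT0lam : (k : ℕ∞) ≤ lam T₀)
    (h : ∀ Y ⊆ X, Y.Finite → Y.ncard ≤ k + 1 → lam Y ≤ (k : ℕ∞)) :
    lam X ≤ (k : ℕ∞) := by
  set G : Set (Set E) := {Y | T₀ ⊆ Y ∧ Y ⊆ X ∧ lam Y ≤ (k : ℕ∞)} with hG
  have hT0G : T₀ ∈ G := ⟨subset_rfl, hT0X, h T₀ hT0X hT0fin (hT0card.trans (Nat.le_succ k))⟩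
  obtain ⟨M, hTM, hMmax⟩ := zorn_subset_nonempty G (fun c hcG hchain hcne => by
    refine ⟨⋃₀ c, ⟨?_, ?_, ?_⟩, fun s hs => subset_sUnion_of_mem hs⟩
    · obtain ⟨s, hs⟩ := hcne
      exact (hcG hs).1.trans (subset_sUnion_of_mem hs)
    · exact sUnion_subset fun s hs => (hcG hs).2.1
    · exact hlim k c hcne hchain fun A hA => (hcG hA).2.2) T₀ hT0G
  obtain ⟨h1, h2, h3⟩ := hMmax.prop
  have hMX : M = X := by
    by_contra hne
    obtain ⟨x, hxX, hxM⟩ : ∃ x, x ∈ X ∧ x ∉ M := by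
      rcases (ssubset_iff_of_subset h2).mp (h2.ssubset_of_ne hne) with ⟨x, hx1, hx2⟩
      exact ⟨x, hx1, hx2⟩
    have hT0x : lam (T₀ ∪ {x}) ≤ (k : ℕ∞) := by
      refine h _ (union_subset hT0X (by simpa)) (hT0fin.union (finite_singleton x)) ?_
      have := Set.ncard_insert_le x T₀
      calc (T₀ ∪ {x}).ncard = (insert x T₀).ncard := by rw [Set.union_singleton]
        _ ≤ T₀.ncard + 1 := Set.ncard_insert_le x T₀
        _ ≤ k + 1 := by omega
    have hun : M ∪ (T₀ ∪ {x}) = M ∪ {x} := by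
      rw [← union_assoc, union_eq_self_of_subset_right h1]
    have hint : M ∩ (T₀ ∪ {x}) = T₀ := by
      ext y
      simp only [mem_inter_iff, mem_union, mem_singleton_iff]
      constructor
      · rintro ⟨hyM, hy | rfl⟩
        · exact hy
        · exact absurd hyM hxM
      · exact fun hy => ⟨h1 hy, Or.inl hy⟩
    have hsubm := hsub M (T₀ ∪ {x})
    rw [hun, hint] at hsubm
    have hle : lam (M ∪ {x}) + (k : ℕ∞) ≤ (k : ℕ∞) + (k : ℕ∞) :=
      le_trans (add_le_add le_rfl hT0lam) (hsubm.trans (add_le_add h3 hT0x))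
    rw [add_comm (k : ℕ∞) (k : ℕ∞)] at hle
    have hstep : lam (M ∪ {x}) ≤ (k : ℕ∞) :=
      (WithTop.add_le_add_iff_right (by simp : (k : ℕ∞) ≠ ⊤)).mp hle
    have hmem : M ∪ {x} ∈ G :=
      ⟨h1.trans subset_union_left, union_subset h2 (by simpa), hstep⟩
    have heq : M ∪ {x} = M := hMmax.eq_of_ge hmem subset_union_left
    exact hxM (heq ▸ (by simp : x ∈ M ∪ {x}))
  exact hMX ▸ h3

/-- If every subset of `X` of size at most `k+1` has connectivity at most `k`,
then `λ(X) ≤ k`. -/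
theorem stmt2 {E : Type*} (lam : Set E → ℕ∞)
    (hsym : SymmFn lam) (hsub : SubmodularFn lam) (hlim : LimitClosedFn lam)
    (k : ℕ) (X : Set E)
    (h : ∀ Y ⊆ X, Y.Finite → Y.ncard ≤ k + 1 → lam Y ≤ (k : ℕ∞)) :
    lam X ≤ (k : ℕ∞) := by
  induction k generalizing X with
  | zero =>
    exact aux_zorn lam hsub hlim 0 X ∅ (empty_subset X) finite_empty (by simp) (by simp) h
  | succ k ih =>
    by_cases hex : ∃ T ⊆ X, T.Finite ∧ T.ncard ≤ k + 1 ∧ ((k + 1 : ℕ) : ℕ∞) ≤ lam T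
    · obtain ⟨T, hTX, hTfin, hTcard, hTlam⟩ := hex
      exact aux_zorn lam hsub hlim (k + 1) X T hTX hTfin hTcard hTlam h
    · push_neg at hex
      have h' : ∀ Y ⊆ X, Y.Finite → Y.ncard ≤ k + 1 → lam Y ≤ (k : ℕ∞) := by
        intro Y hYX hYfin hYcard
        have hlt : lam Y < ((k + 1 : ℕ) : ℕ∞) := hex Y hYX hYfin hYcard
        exact (ENat.lt_add_one_iff (by simp : (k : ℕ∞) ≠ ⊤)).mp
          (by push_cast at hlt ⊢; exact hlt)
      calc lam X ≤ (k : ℕ∞) := ih X h'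
        _ ≤ ((k + 1 : ℕ) : ℕ∞) := by norm_cast; omega
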